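/- Let X, Y be Banach spaces, G ⊆ X an open set, f : G → Y an arbitrary mapping, and V₁ a closed subspace of X such that L(V₁,Y) is separable. Then there exists a σ-upper porous set A ⊆ G such that for each x ∈ G \ A: if f is Lipschitz at x, f is Fréchet differentiable at x along V₁, and V, V₂ are closed subspaces of X with V = V₁ ⊕ V₂ (topological direct sum) such that f is Fréchet differentiable at x along V₂, then f is Fréchet differentiable at x along V. -/

import Mathlib

open Metric Set Topology

variable {X Y : Type*} [NormedAddCommGroup X] [NormedSpace ℝ X] [CompleteSpace X]
  [NormedAddCommGroup Y] [NormedSpace ℝ Y] [CompleteSpace Y]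

/-- `f` is Fréchet differentiable at `a` along the subspace `V`. -/
def FrechetDiffAlong (f : X → Y) (V : Submodule ℝ X) (a : X) : Prop :=
  DifferentiableAt ℝ (fun v : V => f (a + (v : X))) (0 : V)

/-- `f` is Lipschitz at `x`: `limsup_{y→x} ‖f y − f x‖/‖y − x‖ < ∞`. -/
def LipschitzAtPt (f : X → Y) (x : X) : Prop :=
  ∃ L : ℝ, ∀ᶠ y in nhds x, ‖f y - f x‖ ≤ L * ‖y - x‖

/-- `A` is (upper) porous at `x`. -/
def PorousAt {Z : Type*} [MetricSpace Z] (A : Set Z) (x : Z) : Prop :=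
  ∃ c > (0 : ℝ), ∀ δ > (0 : ℝ), ∃ t, t ∈ ball x δ ∧ t ≠ x ∧ ball t (c * dist t x) ∩ A = ∅

/-- `A` is (upper) porous: porous at each of its points. -/
def Porous {Z : Type*} [MetricSpace Z] (A : Set Z) : Prop :=
  ∀ x ∈ A, PorousAt A x

/-- `A` is σ-(upper) porous: a countable union of porous sets. -/
def SigmaPorous {Z : Type*} [MetricSpace Z] (A : Set Z) : Prop :=
  ∃ u : ℕ → Set Z, (∀ n, Porous (u n)) ∧ A = ⋃ n, u n

/-- Auxiliary "bad behaviour" set. -/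
def Epiece (f : X → Y) (V₁ : Submodule ℝ X) (T : V₁ →L[ℝ] Y) (L m : ℕ) (r : ℝ)
    (G : Set X) : Set X :=
  {x | x ∈ G ∧
    (∀ y : X, ‖y - x‖ ≤ r → ‖f y - f x‖ ≤ L * ‖y - x‖) ∧
    (∀ v : V₁, ‖(v : X)‖ ≤ r → ‖f (x + v) - f x - T v‖ ≤ ‖(v : X)‖ / (2 * m)) ∧
    (∀ δ > (0:ℝ), ∃ (z : X) (v : V₁), ‖z - x‖ < δ ∧ ‖(v : X)‖ < δ ∧
      (‖(v : X)‖ + ‖z - x‖) / m < ‖f (z + v) - f z - T v‖)}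

set_option maxHeartbeats 1000000 in
lemma epiece_porous (f : X → Y) (V₁ : Submodule ℝ X) (T : V₁ →L[ℝ] Y) (L m : ℕ)
    (hL : 1 ≤ L) (hm : 1 ≤ m) (r : ℝ) (hr : 0 < r) (G : Set X) :
    Porous (Epiece f V₁ T L m r G) := by
  intro x hx
  set E := Epiece f V₁ T L m r G with hE
  have hL0 : (1:ℝ) ≤ L := by exact_mod_cast hL
  have hm0 : (1:ℝ) ≤ m := by exact_mod_cast hm
  obtain ⟨hxG, h1, h2, h3⟩ := hx
  set c : ℝ := 1 / (16 * L * m) with hc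
  have hc0 : 0 < c := by rw [hc]; positivity
  have hc1 : c ≤ 1/2 := by
    rw [hc, div_le_div_iff₀ (by positivity) (by norm_num)]
    nlinarith
  refine ⟨c, hc0, ?_⟩
  intro δ hδ
  obtain ⟨z, v, hz, hv, hfail⟩ := h3 (min δ r / 4) (by positivity)
  set s : ℝ := ‖(v : X)‖ + ‖z - x‖ with hs
  have hvn : (0:ℝ) ≤ ‖(v:X)‖ := norm_nonneg _
  have hzn : (0:ℝ) ≤ ‖z - x‖ := norm_nonneg _
  have hs0 : 0 ≤ s := by rw [hs]; positivity
  have hsδ : s < δ := by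
    have ha := min_le_left δ r
    rw [hs]; linarith
  have hsr : s ≤ r := by
    have hb := min_le_right δ r
    rw [hs]; linarith
  have hzx : ‖z - x‖ ≤ s := by rw [hs]; linarith
  have hvs : ‖(v:X)‖ ≤ s := by rw [hs]; linarith
  have hzvx : ‖z + (v:X) - x‖ ≤ s := by
    have h' : z + (v:X) - x = (v:X) + (z - x) := by abel
    rw [h', hs]; exact norm_add_le _ _
  clear_value c s
  by_cases hc1' : z ≠ x ∧ ball z (c * dist z x) ∩ E = ∅
  · exact ⟨z, mem_ball.2 (by rw [dist_eq_norm]; linarith), hc1'.1, hc1'.2⟩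
  by_cases hc2' : z + (v:X) ≠ x ∧ ball (z + (v:X)) (c * dist (z + (v:X)) x) ∩ E = ∅
  · exact ⟨z + (v:X), mem_ball.2 (by rw [dist_eq_norm]; linarith), hc2'.1, hc2'.2⟩
  exfalso
  have hxE : x ∈ E := ⟨hxG, h1, h2, h3⟩
  have hx0 : ∃ x₀, x₀ ∈ E ∧ ‖x₀ - z‖ ≤ c * s := by
    rcases eq_or_ne z x with h | h
    · refine ⟨x, hxE, ?_⟩
      rw [h]; simpa using mul_nonneg hc0.le hs0
    · have hne : ball z (c * dist z x) ∩ E ≠ ∅ := fun he => hc1' ⟨h, he⟩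
      obtain ⟨x₀, hb, hEmem⟩ := Set.nonempty_iff_ne_empty.2 hne
      refine ⟨x₀, hEmem, ?_⟩
      have hd := mem_ball.1 hb
      rw [dist_eq_norm, dist_eq_norm] at hd
      have h2' : c * ‖z - x‖ ≤ c * s := by gcongr
      linarith [hd.le]
  have hx1 : ∃ x₁, x₁ ∈ E ∧ ‖x₁ - (z + (v:X))‖ ≤ c * s := by
    rcases eq_or_ne (z + (v:X)) x with h | h
    · refine ⟨x, hxE, ?_⟩
      rw [h]; simpa using mul_nonneg hc0.le hs0
    · have hne : ball (z + (v:X)) (c * dist (z + (v:X)) x) ∩ E ≠ ∅ := fun he => hc2' ⟨h, he⟩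
      obtain ⟨x₁, hb, hEmem⟩ := Set.nonempty_iff_ne_empty.2 hne
      refine ⟨x₁, hEmem, ?_⟩
      have hd := mem_ball.1 hb
      rw [dist_eq_norm, dist_eq_norm] at hd
      have h2' : c * ‖z + (v:X) - x‖ ≤ c * s := by gcongr
      linarith [hd.le]
  obtain ⟨x₀, ⟨-, h10, h20, -⟩, hd0⟩ := hx0
  obtain ⟨x₁, ⟨-, h11, h21, -⟩, hd1⟩ := hx1
  have hcs0 : 0 ≤ c * s := mul_nonneg hc0.le hs0
  have hcss : c * s ≤ s := by nlinarith
  have h2cs : 2 * (c * s) ≤ s := by nlinarith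
  have hcsr : c * s ≤ r := le_trans hcss hsr
  have hd1' : ‖z + (v:X) - x₁‖ ≤ c * s := by rw [norm_sub_rev]; exact hd1
  have e1 : ‖f (z + (v:X)) - f x₁‖ ≤ L * (c * s) := by
    calc ‖f (z + (v:X)) - f x₁‖ ≤ L * ‖z + (v:X) - x₁‖ := h11 _ (le_trans hd1' hcsr)
      _ ≤ L * (c * s) := by gcongr
  have e2 : ‖f x₁ - f (x₀ + (v:X))‖ ≤ L * (2 * (c * s)) := by
    have hid : x₀ + (v:X) - x₁ = (x₀ - z) + (z + (v:X) - x₁) := by abel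
    have hnorm : ‖x₀ + (v:X) - x₁‖ ≤ 2 * (c * s) := by
      rw [hid]
      calc ‖(x₀ - z) + (z + (v:X) - x₁)‖ ≤ ‖x₀ - z‖ + ‖z + (v:X) - x₁‖ := norm_add_le _ _
        _ ≤ 2 * (c * s) := by linarith
    rw [norm_sub_rev]
    calc ‖f (x₀ + (v:X)) - f x₁‖ ≤ L * ‖x₀ + (v:X) - x₁‖ := h11 _ (by linarith)
      _ ≤ L * (2 * (c * s)) := by gcongr
  have e3 : ‖f (x₀ + (v:X)) - f x₀ - T v‖ ≤ s / (2 * m) := by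
    calc ‖f (x₀ + (v:X)) - f x₀ - T v‖ ≤ ‖(v:X)‖ / (2 * m) := h20 v (le_trans hvs hsr)
      _ ≤ s / (2 * m) := by gcongr
  have e4 : ‖f x₀ - f z‖ ≤ L * (c * s) := by
    have hzz : ‖z - x₀‖ ≤ c * s := by rw [norm_sub_rev]; exact hd0
    rw [norm_sub_rev]
    calc ‖f z - f x₀‖ ≤ L * ‖z - x₀‖ := h10 _ (le_trans hzz hcsr)
      _ ≤ L * (c * s) := by gcongr
  have decomp : f (z + (v:X)) - f z - T v =
      (f (z + (v:X)) - f x₁) + (f x₁ - f (x₀ + (v:X))) +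
      (f (x₀ + (v:X)) - f x₀ - T v) + (f x₀ - f z) := by abel
  have hmp : (0:ℝ) < m := by linarith
  have hLcs : (L:ℝ) * (c * s) = s / (16 * m) := by
    rw [hc]
    have hL' : (L:ℝ) ≠ 0 := by linarith
    have hm' : (m:ℝ) ≠ 0 := by linarith
    field_simp
  have e2' : (L:ℝ) * (2 * (c * s)) = 2 * ((L:ℝ) * (c * s)) := by ring
  have hchain : s / m < 4 * ((L:ℝ) * (c * s)) + s / (2 * m) := by
    have hsum : ‖f (z + (v:X)) - f z - T v‖ ≤ 4 * ((L:ℝ) * (c * s)) + s / (2 * m) := by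
      rw [decomp]
      rw [e2'] at e2
      have t1 := norm_add_le (f (z + (v:X)) - f x₁) (f x₁ - f (x₀ + (v:X)))
      have t2 := norm_add_le ((f (z + (v:X)) - f x₁) + (f x₁ - f (x₀ + (v:X))))
        (f (x₀ + (v:X)) - f x₀ - T v)
      have t3 := norm_add_le (((f (z + (v:X)) - f x₁) + (f x₁ - f (x₀ + (v:X)))) +
        (f (x₀ + (v:X)) - f x₀ - T v)) (f x₀ - f z)
      linarith
    exact lt_of_lt_of_le hfail hsum
  rw [hLcs] at hchain
  have heq : 4 * (s / (16 * m)) + s / (2 * m) = (3 / 4) * (s / m) := by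
    field_simp
    ring
  rw [heq] at hchain
  have hsm : 0 ≤ s / m := by positivity
  linarith

-- little-o extraction
lemma fderiv_small {W : Submodule ℝ X} {f : X → Y} {x : X} {g : W →L[ℝ] Y}
    (hg : HasFDerivAt (fun w : W => f (x + (w : X))) g 0) {ε : ℝ} (hε : 0 < ε) :
    ∃ ρ > (0:ℝ), ∀ w : W, ‖(w : X)‖ < ρ → ‖f (x + (w : X)) - f x - g w‖ ≤ ε * ‖(w : X)‖ := by
  have h := (hasFDerivAt_iff_isLittleO_nhds_zero.1 hg)
  have h2 := (Asymptotics.isLittleO_iff.1 h) hε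
  rw [Metric.eventually_nhds_iff] at h2
  obtain ⟨ρ, hρ, hball⟩ := h2
  refine ⟨ρ, hρ, fun w hw => ?_⟩
  have hd : dist w 0 < ρ := by
    rw [dist_zero_right]; exact hw
  have := hball hd
  simpa using this

section decomp
variable (V V₁ V₂ : Submodule ℝ X)

lemma decomp_exists (hinf : V₁ ⊓ V₂ = ⊥) (hsup : V₁ ⊔ V₂ = V) :
    ∃ e : (V₁ × V₂) ≃ₗ[ℝ] V, ∀ w : V, (((e.symm w).1 : X)) + (((e.symm w).2 : X)) = (w : X) := by
  set ψ : V₁ × V₂ →ₗ[ℝ] X := (V₁.subtype).coprod (V₂.subtype) with hψ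
  have hψ_apply : ∀ a : V₁ × V₂, ψ a = (a.1 : X) + (a.2 : X) := fun a => rfl
  have hinj : Function.Injective ψ := by
    rw [← LinearMap.ker_eq_bot, Submodule.eq_bot_iff]
    rintro ⟨a, b⟩ hab
    have hab' : (a : X) + (b : X) = 0 := hab
    have hmem : (a : X) ∈ V₁ ⊓ V₂ := by
      refine ⟨a.2, ?_⟩
      have hx : (a : X) = -(b : X) := eq_neg_of_add_eq_zero_left hab'
      rw [hx]
      exact V₂.neg_mem b.2
    rw [hinf, Submodule.mem_bot] at hmem
    have hb : (b : X) = 0 := by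
      have := hab'; rw [hmem] at this; simpa using this
    have : a = 0 := Subtype.ext hmem
    have hb' : b = 0 := Subtype.ext hb
    simp [this, hb', Prod.ext_iff]
  have hrange : LinearMap.range ψ = V := by
    rw [hψ, LinearMap.range_coprod, Submodule.range_subtype, Submodule.range_subtype, hsup]
  refine ⟨(LinearEquiv.ofInjective ψ hinj).trans (LinearEquiv.ofEq _ _ hrange), fun w => ?_⟩
  set e := (LinearEquiv.ofInjective ψ hinj).trans (LinearEquiv.ofEq _ _ hrange) with he
  have hkey : (↑(e (e.symm w)) : X) = ψ (e.symm w) := by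
    rw [he]
    simp [LinearEquiv.trans_apply, LinearEquiv.ofEq]
    rfl
  rw [LinearEquiv.apply_symm_apply] at hkey
  rw [← hψ_apply]
  exact hkey.symm
end decomp

set_option maxHeartbeats 2000000 in
set_option synthInstance.maxHeartbeats 1000000 in
theorem sigmaPorous_exceptional_set_direct_sum
    (V₁ : Submodule ℝ X) (hV₁ : IsClosed (V₁ : Set X))
    [TopologicalSpace.SeparableSpace (V₁ →L[ℝ] Y)]
    (G : Set X) (hG : IsOpen G) (f : X → Y) :
    ∃ A : Set X, A ⊆ G ∧ SigmaPorous A ∧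
      ∀ x ∈ G \ A, ∀ V V₂ : Submodule ℝ X,
        LipschitzAtPt f x → FrechetDiffAlong f V₁ x →
        IsClosed (V : Set X) → IsClosed (V₂ : Set X) →
        V₁ ⊓ V₂ = ⊥ → V₁ ⊔ V₂ = V →
        (∃ p : ℝ, ∀ v₁ ∈ V₁, ∀ v₂ ∈ V₂, max ‖v₁‖ ‖v₂‖ ≤ p * ‖v₁ + v₂‖) →
        FrechetDiffAlong f V₂ x →
        FrechetDiffAlong f V x := by
  classical
  have hne : Nonempty (V₁ →L[ℝ] Y) := ⟨0⟩
  obtain ⟨Tseq, hdense⟩ : ∃ Tseq : ℕ → (V₁ →L[ℝ] Y), DenseRange Tseq :=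
    ⟨TopologicalSpace.denseSeq _, TopologicalSpace.denseRange_denseSeq _⟩
  set e4 : (ℕ × ℕ × ℕ × ℕ) ≃ ℕ := Denumerable.eqv (ℕ × ℕ × ℕ × ℕ) with he4
  set u : ℕ → Set X := fun n =>
    Epiece f V₁ (Tseq (e4.symm n).1) ((e4.symm n).2.1 + 1) ((e4.symm n).2.2.1 + 1)
      (1 / (((e4.symm n).2.2.2 : ℝ) + 1)) G with hu
  refine ⟨⋃ n, u n, ?_, ⟨u, ?_, rfl⟩, ?_⟩
  · exact iUnion_subset fun n y hy => hy.1
  · intro n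
    exact epiece_porous f V₁ _ _ _ (Nat.le_add_left 1 _) (Nat.le_add_left 1 _) _
      (by positivity) G
  · rintro x ⟨hxG, hxA⟩ V V₂ hLip hF1 hVcl hV₂cl hinf hsup hp hF2
    have hnotin : ∀ (k L m q : ℕ),
        x ∉ Epiece f V₁ (Tseq k) (L + 1) (m + 1) (1 / ((q : ℝ) + 1)) G := by
      intro k L m q hmem
      exact hxA (mem_iUnion.2 ⟨e4 (k, L, m, q), by
        simpa [hu, Equiv.symm_apply_apply] using hmem⟩)
    set T₀ : V₁ →L[ℝ] Y := fderiv ℝ (fun v : V₁ => f (x + (v : X))) 0 with hT₀def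
    have hT₀ : HasFDerivAt (fun v : V₁ => f (x + (v : X))) T₀ 0 := hF1.hasFDerivAt
    obtain ⟨L₀, hev⟩ := hLip
    rw [Metric.eventually_nhds_iff] at hev
    obtain ⟨ρL, hρL, hLip'⟩ := hev
    obtain ⟨Lnat, hLnat⟩ := exists_nat_ge L₀
    -- Step 1: the regularity property off the porous pieces
    have hreg : ∀ η > (0:ℝ), ∃ δ > (0:ℝ), ∀ (z : X) (v : V₁), ‖z - x‖ ≤ δ → ‖(v : X)‖ ≤ δ →
        ‖f (z + (v : X)) - f z - T₀ v‖ ≤ η * (‖(v : X)‖ + ‖z - x‖) := by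
      by_contra hcon
      push_neg at hcon
      obtain ⟨η₀, hη₀, hbad⟩ := hcon
      obtain ⟨m, hm⟩ := exists_nat_ge (2 / η₀)
      set M : ℝ := (m : ℝ) + 1 with hM
      have hM0 : (0:ℝ) < M := by positivity
      have hηM : 2 / M ≤ η₀ := by
        rw [div_le_iff₀ hM0]
        have h2 : 2 / η₀ ≤ M := by rw [hM]; linarith
        rw [div_le_iff₀ hη₀] at h2
        linarith
      obtain ⟨k, hk⟩ := hdense.exists_dist_lt T₀ (show (0:ℝ) < 1 / (4 * M) by positivity)
      have hTk : ‖Tseq k - T₀‖ ≤ 1 / (4 * M) := by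
        have h' := hk.le
        rw [dist_comm] at h'
        have he : dist (Tseq k) T₀ = ‖Tseq k - T₀‖ := by exact @dist_eq_norm _ _ (Tseq k) T₀
        rw [he] at h'
        exact h'
      obtain ⟨ρ₂, hρ₂, happ⟩ := fderiv_small hT₀ (show (0:ℝ) < 1 / (4 * M) by positivity)
      obtain ⟨q, hq⟩ := exists_nat_one_div_lt (show (0:ℝ) < min ρL ρ₂ by positivity)
      apply hnotin k Lnat m q
      have hr0 : (0:ℝ) < 1 / ((q : ℝ) + 1) := by positivity
      have hrL : 1 / ((q : ℝ) + 1) < ρL := lt_of_lt_of_le hq (min_le_left _ _)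
      have hrρ₂ : 1 / ((q : ℝ) + 1) < ρ₂ := lt_of_lt_of_le hq (min_le_right _ _)
      refine ⟨hxG, ?_, ?_, ?_⟩
      · intro y hy
        have h1 : ‖f y - f x‖ ≤ L₀ * ‖y - x‖ := by
          apply hLip'
          rw [dist_eq_norm]
          exact lt_of_le_of_lt hy hrL
        have h2 : L₀ * ‖y - x‖ ≤ ((Lnat : ℝ) + 1) * ‖y - x‖ := by
          have : (0:ℝ) ≤ ‖y - x‖ := norm_nonneg _
          push_cast
          nlinarith
        calc ‖f y - f x‖ ≤ L₀ * ‖y - x‖ := h1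
          _ ≤ ((Lnat:ℕ) + 1 : ℕ) * ‖y - x‖ := by push_cast; push_cast at h2; linarith
      · intro v hv
        have hv' : ‖(v : X)‖ < ρ₂ := lt_of_le_of_lt hv hrρ₂
        have ha := happ v hv'
        have hb : ‖(Tseq k - T₀) v‖ ≤ (1 / (4 * M)) * ‖(v : X)‖ := by
          calc ‖(Tseq k - T₀) v‖ ≤ ‖Tseq k - T₀‖ * ‖v‖ := (Tseq k - T₀).le_opNorm v
            _ ≤ (1 / (4 * M)) * ‖(v : X)‖ := by
                have hvv : ‖v‖ = ‖(v : X)‖ := rfl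
                rw [hvv]
                exact mul_le_mul_of_nonneg_right hTk (norm_nonneg _)
        have hdecomp : f (x + (v : X)) - f x - Tseq k v =
            (f (x + (v : X)) - f x - T₀ v) - (Tseq k - T₀) v := by
          simp only [ContinuousLinearMap.sub_apply]
          abel
        calc ‖f (x + (v : X)) - f x - Tseq k v‖
            ≤ ‖f (x + (v : X)) - f x - T₀ v‖ + ‖(Tseq k - T₀) v‖ := by
              rw [hdecomp]; exact norm_sub_le _ _
          _ ≤ (1 / (4 * M)) * ‖(v : X)‖ + (1 / (4 * M)) * ‖(v : X)‖ := by linarith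
          _ ≤ ‖(v : X)‖ / (2 * ((m:ℕ) + 1 : ℕ)) := by
              have hcast : (((m:ℕ) + 1 : ℕ) : ℝ) = M := by push_cast [hM]; ring
              rw [hcast]
              have heq2 : 1 / (4 * M) * ‖(v : X)‖ + 1 / (4 * M) * ‖(v : X)‖
                  = ‖(v : X)‖ / (2 * M) := by field_simp; ring
              rw [heq2]
      · intro δ hδ
        obtain ⟨z, v, hz, hv, hfar⟩ := hbad (δ / 2) (by positivity)
        refine ⟨z, v, lt_of_le_of_lt hz (by linarith), lt_of_le_of_lt hv (by linarith), ?_⟩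
        set s : ℝ := ‖(v : X)‖ + ‖z - x‖ with hs
        have hs0 : (0:ℝ) ≤ s := by positivity
        have hvb : ‖(v : X)‖ ≤ s := by rw [hs]; linarith [norm_nonneg (z - x)]
        clear_value s
        have hb : ‖(Tseq k - T₀) v‖ ≤ (1 / (4 * M)) * s := by
          calc ‖(Tseq k - T₀) v‖ ≤ ‖Tseq k - T₀‖ * ‖v‖ := (Tseq k - T₀).le_opNorm v
            _ ≤ (1 / (4 * M)) * s := by
                have hvv : ‖v‖ = ‖(v : X)‖ := rfl
                rw [hvv]
                have := mul_le_mul hTk hvb (norm_nonneg _) (by positivity)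
                linarith
        have hid : f (z + (v : X)) - f z - Tseq k v =
            (f (z + (v : X)) - f z - T₀ v) - (Tseq k - T₀) v := by
          simp only [ContinuousLinearMap.sub_apply]
          abel
        have hlow : ‖f (z + (v : X)) - f z - T₀ v‖ - ‖(Tseq k - T₀) v‖
            ≤ ‖f (z + (v : X)) - f z - Tseq k v‖ := by
          rw [hid]
          exact le_trans (by linarith [norm_sub_norm_le (f (z + (v:X)) - f z - T₀ v) ((Tseq k - T₀) v)]) (le_refl _)
        have hfar' : η₀ * s < ‖f (z + (v : X)) - f z - T₀ v‖ := hfar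
        have hstep : s / M < ‖f (z + (v : X)) - f z - Tseq k v‖ := by
          have h1 : (2 / M) * s ≤ η₀ * s := mul_le_mul_of_nonneg_right hηM hs0
          have hkey : (2 / M) * s - (1 / (4 * M)) * s = (7 / 4) * (s / M) := by
            field_simp
            ring
          have hsM : 0 ≤ s / M := by positivity
          have : s / M ≤ (2 / M) * s - (1 / (4 * M)) * s := by rw [hkey]; linarith
          linarith
        have hcast : (((m:ℕ) + 1 : ℕ) : ℝ) = M := by rw [hM]; push_cast; ring
        rw [hcast]
        exact hstep
    -- Step 2: construct the derivative along V and conclude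
    obtain ⟨p, hpbound⟩ := hp
    set p' : ℝ := max p 1 with hp'
    have hp'1 : (1:ℝ) ≤ p' := le_max_right _ _
    have hp'0 : (0:ℝ) < p' := lt_of_lt_of_le one_pos hp'1
    obtain ⟨edec, hedec⟩ := decomp_exists V V₁ V₂ hinf hsup
    set S : V₂ →L[ℝ] Y := fderiv ℝ (fun v : V₂ => f (x + (v : X))) 0 with hSdef
    have hS : HasFDerivAt (fun v : V₂ => f (x + (v : X))) S 0 := hF2.hasFDerivAt
    -- component bounds
    have hcomp : ∀ w : V, ‖((edec.symm w).1 : X)‖ ≤ p' * ‖(w : X)‖ ∧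
        ‖((edec.symm w).2 : X)‖ ≤ p' * ‖(w : X)‖ := by
      intro w
      have hb := hpbound ((edec.symm w).1 : X) (edec.symm w).1.2 ((edec.symm w).2 : X)
        (edec.symm w).2.2
      rw [hedec w] at hb
      have h1 := le_trans (le_max_left _ _) hb
      have h2 := le_trans (le_max_right _ _) hb
      have hpp : p * ‖(w : X)‖ ≤ p' * ‖(w : X)‖ :=
        mul_le_mul_of_nonneg_right (le_max_left _ _) (norm_nonneg _)
      exact ⟨le_trans h1 hpp, le_trans h2 hpp⟩
    -- the candidate derivative
    set ℓ : V →ₗ[ℝ] Y :=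
      ((T₀ : V₁ →ₗ[ℝ] Y).comp ((LinearMap.fst ℝ V₁ V₂).comp edec.symm.toLinearMap)) +
      ((S : V₂ →ₗ[ℝ] Y).comp ((LinearMap.snd ℝ V₁ V₂).comp edec.symm.toLinearMap)) with hℓ
    have hℓ_apply : ∀ w : V, ℓ w = T₀ (edec.symm w).1 + S (edec.symm w).2 := fun w => rfl
    have hℓ_bound : ∀ w : V, ‖ℓ w‖ ≤ ((‖T₀‖ + ‖S‖) * p') * ‖w‖ := by
      intro w
      rw [hℓ_apply]
      obtain ⟨hb1, hb2⟩ := hcomp w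
      have hwn : ‖w‖ = ‖(w : X)‖ := rfl
      calc ‖T₀ (edec.symm w).1 + S (edec.symm w).2‖
          ≤ ‖T₀ (edec.symm w).1‖ + ‖S (edec.symm w).2‖ := norm_add_le _ _
        _ ≤ ‖T₀‖ * ‖(edec.symm w).1‖ + ‖S‖ * ‖(edec.symm w).2‖ :=
            add_le_add (T₀.le_opNorm _) (S.le_opNorm _)
        _ ≤ ‖T₀‖ * (p' * ‖(w : X)‖) + ‖S‖ * (p' * ‖(w : X)‖) := by
            have hn1 : ‖(edec.symm w).1‖ = ‖((edec.symm w).1 : X)‖ := rfl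
            have hn2 : ‖(edec.symm w).2‖ = ‖((edec.symm w).2 : X)‖ := rfl
            rw [hn1, hn2]
            exact add_le_add
              (mul_le_mul_of_nonneg_left hb1 (ContinuousLinearMap.opNorm_nonneg _))
              (mul_le_mul_of_nonneg_left hb2 (ContinuousLinearMap.opNorm_nonneg _))
        _ = ((‖T₀‖ + ‖S‖) * p') * ‖w‖ := by rw [hwn]; ring
    set D : V →L[ℝ] Y := ℓ.mkContinuous _ hℓ_bound with hD
    have hD_apply : ∀ w : V, D w = T₀ (edec.symm w).1 + S (edec.symm w).2 := fun w => rfl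
    -- conclude
    refine HasFDerivAt.differentiableAt (f' := D) ?_
    rw [hasFDerivAt_iff_isLittleO_nhds_zero, Asymptotics.isLittleO_iff]
    intro ε hε
    set η : ℝ := ε / (3 * p') with hηdef
    have hηpos : 0 < η := by rw [hηdef]; positivity
    obtain ⟨δ₁, hδ₁, hregη⟩ := hreg η hηpos
    obtain ⟨δ₂, hδ₂, happ₂⟩ := fderiv_small hS hηpos
    rw [Metric.eventually_nhds_iff]
    refine ⟨min δ₁ δ₂ / (p' + 1), by positivity, fun w hw => ?_⟩
    rw [dist_zero_right] at hw
    have hwn : ‖(w : X)‖ < min δ₁ δ₂ / (p' + 1) := hw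
    set w₁ := (edec.symm w).1 with hw₁
    set w₂ := (edec.symm w).2 with hw₂
    obtain ⟨hb1, hb2⟩ := hcomp w
    have hmin_pos : 0 < min δ₁ δ₂ := lt_min hδ₁ hδ₂
    have hbig : p' * ‖(w : X)‖ < min δ₁ δ₂ := by
      have h1 : p' * ‖(w : X)‖ ≤ p' * (min δ₁ δ₂ / (p' + 1)) :=
        mul_le_mul_of_nonneg_left hwn.le hp'0.le
      have h2 : p' * (min δ₁ δ₂ / (p' + 1)) < min δ₁ δ₂ := by
        rw [mul_div_assoc']
        rw [div_lt_iff₀ (by positivity)]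
        nlinarith
      linarith
    have hw1δ₁ : ‖(w₁ : X)‖ ≤ δ₁ := le_trans hb1 (le_trans hbig.le (min_le_left _ _))
    have hw2δ₁ : ‖(w₂ : X)‖ ≤ δ₁ := le_trans hb2 (le_trans hbig.le (min_le_left _ _))
    have hw2δ₂ : ‖(w₂ : X)‖ < δ₂ :=
      lt_of_le_of_lt hb2 (lt_of_lt_of_le hbig (min_le_right _ _))
    simp only [zero_add, Submodule.coe_zero, add_zero]
    have hsplit : x + (w : X) = (x + (w₂ : X)) + (w₁ : X) := by
      rw [← hedec w]
      push_cast
      abel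
    have hzx : ‖(x + (w₂ : X)) - x‖ = ‖(w₂ : X)‖ := by
      congr 1
      abel
    have hbound1 : ‖f ((x + (w₂ : X)) + (w₁ : X)) - f (x + (w₂ : X)) - T₀ w₁‖ ≤
        η * (‖(w₁ : X)‖ + ‖(w₂ : X)‖) := by
      have := hregη (x + (w₂ : X)) w₁ (by rw [hzx]; exact hw2δ₁) hw1δ₁
      rwa [hzx] at this
    have hbound2 : ‖f (x + (w₂ : X)) - f x - S w₂‖ ≤ η * ‖(w₂ : X)‖ := happ₂ w₂ hw2δ₂
    have hdecomp2 : f (x + (w : X)) - f x - D w =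
        (f ((x + (w₂ : X)) + (w₁ : X)) - f (x + (w₂ : X)) - T₀ w₁) +
        (f (x + (w₂ : X)) - f x - S w₂) := by
      rw [hsplit, hD_apply]
      abel
    have hfinal : η * (3 * p' * ‖(w : X)‖) = ε * ‖(w : X)‖ := by
      rw [hηdef]
      field_simp
    have hwnorm : ‖w‖ = ‖(w : X)‖ := rfl
    calc ‖f (x + (w : X)) - f x - D w‖
        ≤ η * (‖(w₁ : X)‖ + ‖(w₂ : X)‖) + η * ‖(w₂ : X)‖ := by
          rw [hdecomp2]
          exact le_trans (norm_add_le _ _) (add_le_add hbound1 hbound2)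
      _ ≤ η * (3 * p' * ‖(w : X)‖) := by nlinarith [hηpos.le, norm_nonneg ((w : X))]
      _ = ε * ‖w‖ := by rw [hwnorm, hfinal]
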